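/- Let V be a finite-dimensional module over sl₂(k) (k a field of characteristic 0) with standard basis (e, h, f), and let v ∈ V be a nonzero vector with h·v = m v for an integer m < 0. Then e^{−m}·v ≠ 0. -/

import Mathlib

open LieModule Module Set

section Aux

variable {k : Type} [Field k] [CharZero k]

attribute [local instance 100] LieRing.ofAssociativeRing

private lemma sl2aux : ∀ (d : ℕ) (V : Type) (_ : AddCommGroup V), ∀ (_ : Module k V)
    (_ : FiniteDimensional k V),
    finrank k V ≤ d →
    ∀ (E H F : Module.End k V), ⁅H, E⁆ = (2 : k) • E → ⁅H, F⁆ = (-2 : k) • F → ⁅E, F⁆ = H →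
    ∀ (v : V), v ≠ 0 → ∀ m : ℤ, m < 0 → H v = (m : k) • v →
    (E ^ (-m).toNat) v ≠ 0 := by
  intro d
  induction d with
  | zero =>
    intro V _ _ _ hd E H F _ _ _ v hv _ _ _
    have : Subsingleton V := finrank_zero_iff.mp (Nat.le_zero.mp hd)
    exact absurd (Subsingleton.elim v 0) hv
  | succ d IH =>
    intro V _ _ _ hd E H F he hf hef v hv m hm hhv
    have hmk : ((m : k)) ≠ 0 := by
      exact_mod_cast Int.cast_ne_zero.mpr hm.ne
    have hHne : H ≠ 0 := by
      rintro rfl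
      exact hv (by simpa [hmk] using hhv.symm)
    have t : IsSl2Triple H E F :=
      { h_ne_zero := hHne
        lie_e_f := hef
        lie_h_e_nsmul := by rw [he, two_smul]; exact (two_nsmul E).symm
        lie_h_f_nsmul := by rw [hf, neg_smul, two_smul]; rw [two_nsmul] }
    -- the F-chain from v
    have hFchain : ∀ i : ℕ, H ((F ^ i) v) = ((m : k) - 2 * i) • (F ^ i) v := by
      intro i
      induction i with
      | zero => simpa using hhv
      | succ i ih =>
        have hHF : H * F = F * H + (-2 : k) • F := by
          rw [Ring.lie_def] at hf; linear_combination (norm := module) hf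
        have : H ((F ^ (i + 1)) v) = (H * F) ((F ^ i) v) := by
          rw [pow_succ']; rfl
        rw [this, hHF]
        have h2 : F ((F ^ i) v) = (F ^ (i + 1)) v := by rw [pow_succ']; rfl
        simp only [LinearMap.add_apply, Module.End.mul_apply, LinearMap.smul_apply, ih,
          map_smul, h2, ← add_smul]
        congr 1
        push_cast
        ring
    -- F is "locally nilpotent" on v : eventually F^n v = 0
    have hex : ∃ n : ℕ, (F ^ n) v = 0 := by
      by_contra! contra
      have hs : (Set.range fun (n : ℕ) ↦ (m : k) - 2 * n).Infinite := by
        rw [Set.infinite_range_iff (fun n₁ n₂ hn ↦ by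
          field_simp at hn
          simpa using hn)]
        infer_instance
      have hli := H.eigenvectors_linearIndependent {(m : k) - 2 * n | n : ℕ}
        (fun ⟨s, hs⟩ ↦ (F ^ Classical.choose hs) v)
        (fun ⟨r, hr⟩ ↦ by
          simp only [Module.End.hasEigenvector_iff, Module.End.mem_eigenspace_iff]
          exact ⟨by rw [hFchain]; exact congrArg (· • _) (Classical.choose_spec hr), contra _⟩)
      haveI := hli.finite
      have hfin : Set.Finite {x | ∃ n : ℕ, (m : k) - 2 * n = x} := Set.toFinite _
      exact hs hfin
    obtain ⟨b, hb1, hb2⟩ := Nat.exists_not_and_succ_of_not_zero_of_exists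
      (p := fun n ↦ (F ^ n) v = 0) (by simpa using hv) hex
    set u : V := (F ^ b) v with hu
    have hu0 : u ≠ 0 := hb1
    have hHu : H u = ((m : k) - 2 * b) • u := hFchain b
    have P : (t.symm).HasPrimitiveVectorWith u (-((m : k) - 2 * b)) :=
      { ne_zero := hu0
        lie_h := by
          show (-H) u = _
          rw [LinearMap.neg_apply, hHu, neg_smul]
        lie_e := by
          show F u = 0
          rw [hu, ← Module.End.mul_apply, ← pow_succ']
          exact hb2 }
    obtain ⟨N, hN⟩ := P.exists_nat
    have hNZ : (N : ℤ) = -m + 2 * b := by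
      have h1 : ((-m + 2 * (b : ℤ) : ℤ) : k) = ((N : ℤ) : k) := by
        push_cast
        linear_combination hN
      exact_mod_cast h1.symm
    -- facts about the string E^i u
    have hte : ∀ x : Module.End k V, LieModule.toEnd k (Module.End k V) V x = x :=
      fun x ↦ by rw [LieModule.toEnd_module_end]; rfl
    have hne : ∀ i : ℕ, i ≤ N → (E ^ i) u ≠ 0 := by
      intro i hi
      have := P.pow_toEnd_f_ne_zero_of_eq_nat hN hi
      rwa [hte] at this
    have hNz : (E ^ (N + 1)) u = 0 := by
      have := P.pow_toEnd_f_eq_zero_of_eq_nat hN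
      rwa [hte] at this
    have hHE : ∀ i : ℕ, H ((E ^ i) u) = ((m : k) - 2 * b + 2 * i) • (E ^ i) u := by
      intro i
      have h1 := P.lie_h_pow_toEnd_f i
      rw [hte] at h1
      have h2 : (-H) ((E ^ i) u) = (-((m : k) - 2 * b) - 2 * i) • (E ^ i) u := h1
      rw [LinearMap.neg_apply, neg_eq_iff_eq_neg] at h2
      rw [h2]
      match_scalars
      ring
    have hFE : ∀ i : ℕ, F ((E ^ (i + 1)) u) = (((i : k) + 1) * ((N : k) - i)) • (E ^ i) u := by
      intro i
      have h1 := P.lie_e_pow_succ_toEnd_f i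
      rw [hte, hN] at h1
      exact h1
    -- the irreducible string submodule
    set g : Fin (N + 1) → V := fun i ↦ (E ^ (i : ℕ)) u with hg
    set S : Submodule k V := Submodule.span k (Set.range g) with hS
    have hgen : ∀ i : Fin (N + 1), g i ∈ S := fun i ↦ Submodule.subset_span ⟨i, rfl⟩
    have hSE : ∀ x ∈ S, E x ∈ S := by
      intro x hx
      have : Submodule.map E S ≤ S := by
        rw [hS, Submodule.map_span_le]
        rintro _ ⟨i, rfl⟩
        rcases eq_or_lt_of_le (Nat.lt_succ_iff.mp i.isLt) with hiN | hiN
        · have : E (g i) = 0 := by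
            rw [hg]
            show (E * E ^ (i : ℕ)) u = 0
            rw [← pow_succ', hiN]
            exact hNz
          rw [this]; exact S.zero_mem
        · have : E (g i) = g ⟨(i : ℕ) + 1, by omega⟩ := by
            rw [hg]
            show (E * E ^ (i : ℕ)) u = _
            rw [← pow_succ']
          rw [this]; exact hgen _
      exact this (Submodule.mem_map_of_mem hx)
    have hSH : ∀ x ∈ S, H x ∈ S := by
      intro x hx
      have : Submodule.map H S ≤ S := by
        rw [hS, Submodule.map_span_le]
        rintro _ ⟨i, rfl⟩
        rw [hg]
        show H ((E ^ (i : ℕ)) u) ∈ S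
        rw [hHE]
        exact S.smul_mem _ (hgen i)
      exact this (Submodule.mem_map_of_mem hx)
    have hSF : ∀ x ∈ S, F x ∈ S := by
      intro x hx
      have : Submodule.map F S ≤ S := by
        rw [hS, Submodule.map_span_le]
        rintro _ ⟨i, rfl⟩
        rcases i with ⟨i, hi⟩
        match i with
        | 0 =>
          have : F (g ⟨0, hi⟩) = 0 := by
            rw [hg]
            show F ((E ^ 0) u) = 0
            rw [pow_zero]
            exact P.lie_e
          rw [this]; exact S.zero_mem
        | (j + 1) =>
          have : F (g ⟨j + 1, hi⟩) = (((j : k) + 1) * ((N : k) - j)) • g ⟨j, by omega⟩ := by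
            rw [hg]
            exact hFE j
          rw [this]
          exact S.smul_mem _ (hgen _)
      exact this (Submodule.mem_map_of_mem hx)
    have huS : u ∈ S := by
      have : g ⟨0, by omega⟩ = u := by rw [hg]; simp
      rw [← this]; exact hgen _
    have hbN : b < N + 1 := by omega
    by_cases hvS : v ∈ S
    · -- v lies in the string: it is a nonzero multiple of E^b u
      have hli : LinearIndependent k g := by
        refine H.eigenvectors_linearIndependent'
          (fun i : Fin (N + 1) ↦ (m : k) - 2 * b + 2 * i) ?_ g
          (fun i ↦ ⟨Module.End.mem_eigenspace_iff.mpr (hHE i),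
            hne i (Nat.lt_succ_iff.mp i.isLt)⟩)
        intro i j hij
        dsimp only at hij
        have h2 : (2 : k) * i = 2 * j := by linear_combination hij
        have h3 : ((i : ℕ) : k) = ((j : ℕ) : k) := mul_left_cancel₀ two_ne_zero h2
        exact Fin.ext (by exact_mod_cast h3)
      obtain ⟨c, hc⟩ := (Submodule.mem_span_range_iff_exists_fun k).mp hvS
      set i₀ : Fin (N + 1) := ⟨b, hbN⟩ with hi₀
      have hczero : ∀ i : Fin (N + 1), i ≠ i₀ → c i = 0 := by
        intro i hi
        have hHv2 : H v = ∑ j : Fin (N + 1), (c j * ((m : k) - 2 * b + 2 * j)) • g j := by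
          rw [← hc, map_sum]
          congr 1
          ext j
          rw [map_smul, hHE, smul_smul]
        have hHv3 : H v = ∑ j : Fin (N + 1), (c j * (m : k)) • g j := by
          rw [hhv, ← hc, Finset.smul_sum]
          congr 1
          ext j
          rw [smul_smul, mul_comm]
        have hzero : ∑ j : Fin (N + 1), (c j * ((m : k) - 2 * b + 2 * j)
            - c j * (m : k)) • g j = 0 := by
          simp only [sub_smul, Finset.sum_sub_distrib]
          rw [← hHv2, ← hHv3, sub_self]
        have hco := Fintype.linearIndependent_iff.mp hli _ hzero i
        have hne' : ((m : k) - 2 * b + 2 * i) - (m : k) ≠ 0 := by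
          intro hzz
          have h4 : (2 : k) * i = 2 * b := by linear_combination hzz
          have h5 : ((i : ℕ) : k) = (b : k) := mul_left_cancel₀ two_ne_zero h4
          have h6 : (i : ℕ) = b := by exact_mod_cast h5
          exact hi (Fin.ext (by simpa [hi₀] using h6))
        have : c i * (((m : k) - 2 * b + 2 * i) - (m : k)) = 0 := by
          rw [← hco]; ring
        exact (mul_eq_zero.mp this).resolve_right hne'
      have hveq : v = c i₀ • g i₀ := by
        rw [← hc]
        rw [Finset.sum_eq_single i₀]
        · intro j _ hj
          rw [hczero j hj, zero_smul]
        · intro hj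
          exact absurd (Finset.mem_univ i₀) hj
      have hc0 : c i₀ ≠ 0 := by
        intro h0
        rw [h0, zero_smul] at hveq
        exact hv hveq
      rw [hveq, map_smul]
      refine smul_ne_zero hc0 ?_
      have : (E ^ (-m).toNat) (g i₀) = (E ^ ((-m).toNat + b)) u := by
        rw [hg]
        show (E ^ (-m).toNat) ((E ^ b) u) = _
        rw [← Module.End.mul_apply, ← pow_add]
      rw [this]
      exact hne _ (by omega)
    · -- v is not in the string: pass to the quotient and use induction on dimension
      have hSnt : Nontrivial S := ⟨⟨u, huS⟩, 0, by simpa using hu0⟩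
      have hEq : S ≤ S.comap E := fun x hx ↦ hSE x hx
      have hHq : S ≤ S.comap H := fun x hx ↦ hSH x hx
      have hFq : S ≤ S.comap F := fun x hx ↦ hSF x hx
      set E' : Module.End k (V ⧸ S) := Submodule.mapQ S S E hEq with hE'
      set H' : Module.End k (V ⧸ S) := Submodule.mapQ S S H hHq with hH'
      set F' : Module.End k (V ⧸ S) := Submodule.mapQ S S F hFq with hF'
      have hrel : ∀ (A B C : Module.End k V) (hA : S ≤ S.comap A) (hB : S ≤ S.comap B)
          (hC : S ≤ S.comap C) (c : k), ⁅A, B⁆ = c • C →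
          ⁅Submodule.mapQ S S A hA, Submodule.mapQ S S B hB⁆
            = c • Submodule.mapQ S S C hC := by
        intro A B C hA hB hC c habc
        refine Submodule.linearMap_qext _ ?_
        ext x
        simp only [LinearMap.comp_apply, Submodule.mkQ_apply, Ring.lie_def,
          LinearMap.sub_apply, Module.End.mul_apply, Submodule.mapQ_apply,
          LinearMap.smul_apply]
        rw [← Submodule.Quotient.mk_smul, ← Submodule.Quotient.mk_sub]
        congr 1
        rw [Ring.lie_def] at habc
        calc A (B x) - B (A x) = (A * B - B * A) x := rfl
          _ = (c • C) x := by rw [habc]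
          _ = c • C x := rfl
      have hdim : finrank k (V ⧸ S) ≤ d := by
        have h1 := S.finrank_quotient_add_finrank
        have h2 : 0 < finrank k S := Module.finrank_pos_iff.mpr hSnt
        omega
      have hvne : S.mkQ v ≠ 0 := fun h0 ↦
        hvS ((Submodule.ker_mkQ S) ▸ LinearMap.mem_ker.mpr h0)
      have hHv' : H' (S.mkQ v) = (m : k) • S.mkQ v := by
        rw [hH', Submodule.mkQ_apply, Submodule.mapQ_apply, hhv,
          Submodule.Quotient.mk_smul]
      have key := IH (V ⧸ S) inferInstance inferInstance inferInstance hdim E' H' F'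
        (hrel H E E hHq hEq hEq 2 he) (hrel H F F hHq hFq hFq (-2) hf)
        (by
          have h3 := hrel E F H hEq hFq hHq 1 (by rw [hef, one_smul])
          rwa [one_smul] at h3)
        (S.mkQ v) hvne m hm hHv'
      have hpow : ∀ (n : ℕ) (x : V), (E' ^ n) (S.mkQ x) = S.mkQ ((E ^ n) x) := by
        intro n
        induction n with
        | zero => intro x; simp
        | succ n ih =>
          intro x
          have e1 : (E' ^ (n + 1)) (S.mkQ x) = E' ((E' ^ n) (S.mkQ x)) := by
            rw [pow_succ']; rfl
          have e2 : (E ^ (n + 1)) x = E ((E ^ n) x) := by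
            rw [pow_succ']; rfl
          rw [e1, e2, ih, hE', Submodule.mkQ_apply, Submodule.mapQ_apply]
          rfl
      intro h0
      exact key (by rw [hpow, h0, map_zero])

end Aux

/-- Let `V` be a finite-dimensional module over `sl₂(k)` (`k` a field of characteristic 0)
with standard basis `(e, h, f)`, and `v ∈ V` a nonzero vector with `h • v = m v` for an
integer `m < 0`.  Then `e^{-m} • v ≠ 0`. -/
theorem stmt_8 (k : Type) [Field k] [CharZero k]
    (L : Type) [LieRing L] [LieAlgebra k L]
    (V : Type) [AddCommGroup V] [Module k V] [LieRingModule L V] [LieModule k L V]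
    [FiniteDimensional k V]
    (e h f : L) (he : ⁅h, e⁆ = (2 : k) • e) (hf : ⁅h, f⁆ = (-2 : k) • f)
    (hef : ⁅e, f⁆ = h)
    (v : V) (hv : v ≠ 0) (m : ℤ) (hm : m < 0) (hhv : ⁅h, v⁆ = (m : k) • v) :
    ((LieModule.toEnd k L V e) ^ (-m).toNat) v ≠ 0 := by
  have φ := LieModule.toEnd k L V
  letI : LieRing (Module.End k V) := LieRing.ofAssociativeRing
  refine sl2aux (finrank k V) V inferInstance inferInstance inferInstance le_rfl
    (LieModule.toEnd k L V e) (LieModule.toEnd k L V h) (LieModule.toEnd k L V f)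
    ?_ ?_ ?_ v hv m hm ?_
  · rw [← LieHom.map_lie, he, map_smul]
  · rw [← LieHom.map_lie, hf, map_smul]
  · rw [← LieHom.map_lie, hef]
  · rw [LieModule.toEnd_apply_apply, hhv]
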